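/- In the reverse-lexicographic order on monomials of fixed degree, any initial segment is also an initial segment (down-set) in the componentwise partial order ≤_p on extended representations: if m is in a rev-lex initial segment S and m' ≤_p m has the same degree, then m' ∈ S. -/

import Mathlib

/-- A monomial of degree `≤ c` in the variables `X_1, X_2, …` is encoded by its
extended representation `e : Fin c → ℕ` with `e` nondecreasing (`e k` is the
index of the `k`-th variable, `X_0 = 1` being padding).  Its degree is the
number of non-padding entries. -/
def degree (c : ℕ) (e : Fin c → ℕ) : ℕ :=
  (Finset.univ.filter (fun k => 0 < e k)).card

/-- The exponent of the variable `X_i` in the monomial with extended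
representation `e`. -/
def mult (c : ℕ) (e : Fin c → ℕ) (i : ℕ) : ℕ :=
  (Finset.univ.filter (fun k => e k = i)).card

/-- The reverse-lexicographic order on (same-degree) monomials:
`e <_{rl} e'` iff there is a variable index `k ≥ 1` with equal exponents above
`k` and a strictly smaller exponent at `k`. -/
def revLexLt (c : ℕ) (e e' : Fin c → ℕ) : Prop :=
  ∃ k : ℕ, 1 ≤ k ∧ (∀ i, k < i → mult c e i = mult c e' i) ∧
    mult c e k < mult c e' k

/-- Any rev-lex initial segment `S` of monomials of a fixed degree `D` is a
down-set in the componentwise partial order `≤_p` on extended representations: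
if `m ∈ S` and `m' ≤_p m` has the same degree, then `m' ∈ S`. -/
theorem stmt15 (c D : ℕ) (S : Set (Fin c → ℕ))
    (hSmono : ∀ e ∈ S, Monotone e)
    (hSdeg : ∀ e ∈ S, degree c e = D)
    (hinit : ∀ e ∈ S, ∀ e' : Fin c → ℕ, Monotone e' → degree c e' = D →
      (revLexLt c e' e ∨ e' = e) → e' ∈ S)
    (m : Fin c → ℕ) (hm : m ∈ S)
    (m' : Fin c → ℕ) (hmono' : Monotone m') (hdeg' : degree c m' = D)
    (hple : ∀ k, m' k ≤ m k) :
    m' ∈ S := by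
  by_cases heq : m' = m
  · exact heq ▸ hm
  · apply hinit m hm m' hmono' hdeg'
    left
    have hs : (Finset.univ.filter (fun j => m' j ≠ m j)).Nonempty := by
      rw [Finset.filter_nonempty_iff]
      by_contra h
      push_neg at h
      exact heq (funext fun j => h j (Finset.mem_univ j))
    set t := (Finset.univ.filter (fun j => m' j ≠ m j)).image m with ht
    have hts : t.Nonempty := hs.image m
    set K := t.max' hts with hK
    obtain ⟨j₀, hj₀mem, hj₀val⟩ := Finset.mem_image.mp (t.max'_mem hts)
    have hj₀ne : m' j₀ ≠ m j₀ := (Finset.mem_filter.mp hj₀mem).2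
    have hbound : ∀ j, m' j ≠ m j → m j ≤ K := fun j hj =>
      t.le_max' (m j) (Finset.mem_image.mpr ⟨j, Finset.mem_filter.mpr ⟨Finset.mem_univ j, hj⟩, rfl⟩)
    have hK1 : 1 ≤ K := by
      have : m' j₀ < m j₀ := lt_of_le_of_ne (hple j₀) hj₀ne
      omega
    refine ⟨K, hK1, ?_, ?_⟩
    · intro i hi
      unfold mult
      congr 1
      ext j
      simp only [Finset.mem_filter, Finset.mem_univ, true_and]
      constructor
      · intro hj
        by_contra hne
        have hd : m' j ≠ m j := fun h => hne (h ▸ hj)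
        have := hbound j hd
        have := hple j
        omega
      · intro hj
        by_contra hne
        have hd : m' j ≠ m j := fun h => hne (h.symm ▸ hj)
        have := hbound j hd
        omega
    · unfold mult
      apply Finset.card_lt_card
      constructor
      · intro j hj
        simp only [Finset.mem_filter, Finset.mem_univ, true_and] at hj ⊢
        by_contra hne
        have hd : m' j ≠ m j := fun h => hne (h ▸ hj)
        have := hbound j hd
        have := hple j
        omega
      · intro hsub
        have hj₀in : j₀ ∈ Finset.univ.filter (fun k => m k = K) := by
          simp [hj₀val, hK]
        have := hsub hj₀in
        simp only [Finset.mem_filter, Finset.mem_univ, true_and] at this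
        exact hj₀ne (this.trans hj₀val.symm)
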